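/- Let H ∈ ℝ^{N×N} be entry-wise nonnegative and strictly upper triangular, fix k ∈ {1,…,N}, and let v ∈ ℝ^N be entry-wise nonnegative with v_m = 0 for m < k, v_k = 1, and v_j ≤ Σ_{m=k}^{j−1} H_{m,j}·v_m for every j > k. Then v ≤ Γ^T e_k entry-wise, i.e. v_j ≤ Γ_{k,j} for every j, where e_k is the k-th standard basis vector. -/
import Mathlib

open Finset

noncomputable section

/-- **Discrepancy vector domination** (proof of Theorem 3.1, Step 3): if the entry-wise
nonnegative vector `v` satisfies `v_m = 0` for `m < k`, `v_k = 1` and the recursion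
`v_j ≤ ∑_{k ≤ m < j} H_{m,j} v_m` for `j > k`, then `v ≤ Γᵀ e_k` entry-wise, i.e.
`v_j ≤ Γ_{k,j}` for every `j`, where `Γ = (I - H)⁻¹`. -/
theorem discrepancy_vector_le_resolvent
    {N : ℕ} (H : Matrix (Fin N) (Fin N) ℝ)
    (hnn : ∀ i j, 0 ≤ H i j) (hut : ∀ i j : Fin N, j ≤ i → H i j = 0)
    (k : Fin N) (v : Fin N → ℝ)
    (hv0 : ∀ m, 0 ≤ v m)
    (hvlt : ∀ m : Fin N, m < k → v m = 0)
    (hvk : v k = 1)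
    (hrec : ∀ j : Fin N, k < j →
      v j ≤ ∑ m ∈ univ.filter (fun m : Fin N => k ≤ m ∧ m < j), H m j * v m) :
    ∀ j : Fin N, v j ≤ (1 - H)⁻¹ k j := by
  set Γ := (1 - H)⁻¹ with hΓ
  -- 1 - H is block triangular (upper)
  have hbt : (1 - H : Matrix (Fin N) (Fin N) ℝ).BlockTriangular id := by
    intro i j hij
    simp only [Matrix.sub_apply, Matrix.one_apply, id] at *
    rw [hut i j (le_of_lt hij), if_neg (by exact fun h => lt_irrefl _ (h ▸ hij))]
    ring
  have hdet : (1 - H : Matrix (Fin N) (Fin N) ℝ).det = 1 := by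
    rw [Matrix.det_of_upperTriangular hbt]
    apply Finset.prod_eq_one
    intro i _
    simp [Matrix.sub_apply, Matrix.one_apply, hut i i le_rfl]
  have hunit : IsUnit (1 - H : Matrix (Fin N) (Fin N) ℝ).det := by
    rw [hdet]; exact isUnit_one
  have hmul : Γ * (1 - H) = 1 := Matrix.nonsing_inv_mul _ hunit
  -- key identity: Γ k j = δ_{kj} + ∑ m, Γ k m * H m j
  have hid : ∀ j : Fin N,
      Γ k j = (if k = j then (1:ℝ) else 0) + ∑ m, Γ k m * H m j := by
    intro j
    have := congrFun (congrFun hmul k) j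
    simp only [Matrix.mul_apply, Matrix.sub_apply, Matrix.one_apply, mul_sub,
      Finset.sum_sub_distrib] at this
    have h1 : ∑ m, Γ k m * (if m = j then (1:ℝ) else 0) = Γ k j := by
      simp [mul_ite]
    rw [h1] at this
    linarith [this]
  -- entries of Γ with index m < j vanish in the sum unless m < j
  have hHz : ∀ (j m : Fin N), ¬ m < j → H m j = 0 := fun j m h =>
    hut m j (le_of_not_gt h)
  -- Γ k m = 0 for m < k, Γ k k = 1, Γ k j ≥ 0 ; all by strong induction
  have key : ∀ j : Fin N, (0 ≤ Γ k j) ∧ (j < k → Γ k j = 0) ∧ v j ≤ Γ k j := by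
    intro j
    induction j using WellFoundedLT.induction with
    | _ j ih =>
      have hsum : ∀ (f : Fin N → ℝ),
          ∑ m, f m * H m j = ∑ m ∈ univ.filter (fun m : Fin N => m < j), f m * H m j := by
        intro f
        rw [Finset.sum_filter]
        apply Finset.sum_congr rfl
        intro m _
        by_cases h : m < j
        · simp [h]
        · simp [h, hHz j m h]
      have hid' := hid j
      rw [hsum (Γ k)] at hid'
      have hnng : 0 ≤ Γ k j := by
        rw [hid']
        apply add_nonneg
        · split <;> norm_num
        · apply Finset.sum_nonneg
          intro m hm
          simp only [Finset.mem_filter] at hm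
          exact mul_nonneg (ih m hm.2).1 (hnn m j)
      refine ⟨hnng, ?_, ?_⟩
      · intro hjk
        rw [hid']
        have : (if k = j then (1:ℝ) else 0) = 0 := by
          rw [if_neg]; exact fun h => absurd (h ▸ hjk) (lt_irrefl j)
        rw [this, zero_add]
        apply Finset.sum_eq_zero
        intro m hm
        simp only [Finset.mem_filter] at hm
        have : Γ k m = 0 := (ih m hm.2).2.1 (lt_trans hm.2 hjk)
        rw [this, zero_mul]
      · rcases lt_trichotomy j k with h | h | h
        · rw [hvlt j h]; exact hnng
        · subst h
          rw [hvk, hid', if_pos rfl]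
          have : ∑ m ∈ univ.filter (fun m : Fin N => m < j), Γ j m * H m j = 0 := by
            apply Finset.sum_eq_zero
            intro m hm
            simp only [Finset.mem_filter] at hm
            rw [(ih m hm.2).2.1 hm.2, zero_mul]
          rw [this]; norm_num
        · calc v j ≤ ∑ m ∈ univ.filter (fun m : Fin N => k ≤ m ∧ m < j), H m j * v m :=
                hrec j h
            _ ≤ ∑ m ∈ univ.filter (fun m : Fin N => k ≤ m ∧ m < j), H m j * Γ k m := by
                apply Finset.sum_le_sum
                intro m hm
                simp only [Finset.mem_filter] at hm
                exact mul_le_mul_of_nonneg_left (ih m hm.2.2).2.2 (hnn m j)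
            _ ≤ ∑ m ∈ univ.filter (fun m : Fin N => m < j), Γ k m * H m j := by
                rw [← Finset.sum_filter_of_ne (s := univ.filter (fun m : Fin N => m < j))
                  (p := fun m => k ≤ m)]
                · apply le_of_eq
                  rw [Finset.filter_filter]
                  apply Finset.sum_congr
                  · apply Finset.filter_congr; intro m _; tauto
                  · intro m _; ring
                · intro m hm hne
                  simp only [Finset.mem_filter] at hm
                  by_contra hle
                  push_neg at hle
                  rw [(ih m hm.2).2.1 hle, zero_mul] at hne
                  exact hne rfl
            _ ≤ Γ k j := by
                rw [hid']
                have : (0:ℝ) ≤ if k = j then 1 else 0 := by split <;> norm_num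
                linarith
  exact fun j => (key j).2.2
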